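/- Let c₁ > 0, c₂ > 0 with c₁ + c₂ ≤ √2, let ρₓ ≥ 0, γ > 0, 0 < x_L < x_R < π, and let N ≥ 1 be an integer. For n ≥ 1 put ωₙ = n², ζₙ = (c₁ωₙ⁻¹ + c₂ωₙ)/2, bₙ = n√(2/π)(cos(n x_R) − cos(n x_L)). Set M = max{N, ⌊ ( (1 + √(1 − 2c₁c₂)) / (√2 c₂) )^{1/2} ⌋}. Assume ω_{M+1}⁴ > (1 + ρₓω_{M+1}²)γ⁻², and for each n with N < n ≤ M assume 4ωₙ⁴ζₙ²(1−ζₙ²) > (1+ρₓωₙ²)γ⁻² if 2ζₙ² ≤ 1 and ωₙ⁴ > (1+ρₓωₙ²)γ⁻² if 2ζₙ² > 1. Define ρₙ = bₙ²(1+ρₓωₙ²)/(4ωₙ⁴ζₙ²(1−ζₙ²) − (1+ρₓωₙ²)γ⁻²) if 2ζₙ² ≤ 1 and ρₙ = bₙ²(1+ρₓωₙ²)/(ωₙ⁴ − (1+ρₓωₙ²)γ⁻²) if 2ζₙ² > 1, and C_M = ω_{M+1}²(1+ρₓω_{M+1}²)/(ω_{M+1}⁴ − (1+ρₓω_{M+1}²)γ⁻²).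 Then the series Σ_{n=N+1}^∞ ρₙ converges and Σ_{n=N+1}^∞ ρₙ ≤ Σ_{n=N+1}^{M} ρₙ + C_M [ (x_R − x_L) − Σ_{n=1}^{M} bₙ²/ωₙ² ]. -/

import Mathlib

set_option maxHeartbeats 1000000
open Real
lemma cos_sum_sq (x : ℝ) (hx : x ∈ Set.Icc (0:ℝ) 1) :
    HasSum (fun n : ℕ => 1 / (n : ℝ) ^ 2 * Real.cos (2 * π * n * x))
      (π ^ 2 * (x ^ 2 - x + 1/6)) := by
  have h := hasSum_one_div_nat_pow_mul_cos (k := 1) one_ne_zero hx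
  norm_num at h
  have h2 : (bernoulli 2 : ℚ) = 1/6 := by
    rw [bernoulli_eq_bernoulli'_of_ne_one (by norm_num), bernoulli'_two]
  simp only [one_div]
  convert h using 1
  simp [Polynomial.bernoulli_def, Finset.sum_range_succ, bernoulli_zero, bernoulli_one,
    Polynomial.aeval_monomial, h2]
  ring

lemma parseval_ind (a c : ℝ) (ha : 0 < a) (hac : a < c) (hc : c < π) :
    HasSum (fun n : ℕ => (2/π) * ((Real.cos (n * c) - Real.cos (n * a))^2 / (n:ℝ)^2))
      (c - a) := by
  have hπ : 0 < π := Real.pi_pos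
  have hA : a/π ∈ Set.Icc (0:ℝ) 1 := ⟨div_nonneg ha.le hπ.le, by rw [div_le_one hπ]; linarith⟩
  have hB : c/π ∈ Set.Icc (0:ℝ) 1 := ⟨div_nonneg (by linarith) hπ.le, by rw [div_le_one hπ]; linarith⟩
  have hC : (c-a)/(2*π) ∈ Set.Icc (0:ℝ) 1 :=
    ⟨div_nonneg (by linarith) (by positivity), by rw [div_le_one (by positivity)]; linarith⟩
  have hD : (a+c)/(2*π) ∈ Set.Icc (0:ℝ) 1 :=
    ⟨div_nonneg (by linarith) (by positivity), by rw [div_le_one (by positivity)]; linarith⟩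
  have h1 := cos_sum_sq _ hA
  have h2 := cos_sum_sq _ hB
  have h3 := cos_sum_sq _ hC
  have h4 := cos_sum_sq _ hD
  have H := (((hasSum_zeta_two.add ((h1.add h2).mul_left (1/2))).sub (h3.add h4)).mul_left (2/π))
  have hfe : (fun n : ℕ => (2/π) * ((1/(n:ℝ)^2 +
        1/2 * (1/(n:ℝ)^2 * Real.cos (2*π*n*(a/π)) + 1/(n:ℝ)^2 * Real.cos (2*π*n*(c/π)))) -
        (1/(n:ℝ)^2 * Real.cos (2*π*n*((c-a)/(2*π))) + 1/(n:ℝ)^2 * Real.cos (2*π*n*((a+c)/(2*π))))))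
      = fun n : ℕ => (2/π) * ((Real.cos (n * c) - Real.cos (n * a))^2 / (n:ℝ)^2) := by
    funext n
    rcases eq_or_ne n 0 with h0 | h0
    · subst h0; norm_num
    · have hn : ((n:ℝ)) ≠ 0 := Nat.cast_ne_zero.mpr h0
      have e1 : 2*π*(n:ℝ)*(a/π) = 2*((n:ℝ)*a) := by field_simp
      have e2 : 2*π*(n:ℝ)*(c/π) = 2*((n:ℝ)*c) := by field_simp
      have e3 : 2*π*(n:ℝ)*((c-a)/(2*π)) = (n:ℝ)*c - (n:ℝ)*a := by field_simp
      have e4 : 2*π*(n:ℝ)*((a+c)/(2*π)) = (n:ℝ)*a + (n:ℝ)*c := by field_simp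
      rw [e1, e2, e3, e4, Real.cos_two_mul, Real.cos_two_mul, Real.cos_sub, Real.cos_add]
      field_simp
      ring
  have hval : (2/π) * ((π^2/6 + 1/2 * (π^2*((a/π)^2 - a/π + 1/6) + π^2*((c/π)^2 - c/π + 1/6))) -
      (π^2*(((c-a)/(2*π))^2 - (c-a)/(2*π) + 1/6) + π^2*(((a+c)/(2*π))^2 - (a+c)/(2*π) + 1/6)))
      = c - a := by
    field_simp
    ring
  rw [← hfe]
  rw [hval] at H
  exact H

lemma aux_nonneg_cc (c₁ c₂ e : ℝ) (hc₁ : 0 < c₁) (hc₂ : 0 < c₂) (he : e^2 = 2)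
    (he0 : 0 < e) (hc : c₁ + c₂ ≤ e) : (0:ℝ) ≤ 1 - 2 * c₁ * c₂ := by
  nlinarith [sq_nonneg (c₁ - c₂), mul_nonneg (sub_nonneg.mpr hc) (by linarith : (0:ℝ) ≤ e + (c₁ + c₂))]

lemma aux_zeta (c₁ c₂ d e X : ℝ) (hc₂ : 0 < c₂) (hd0 : 0 ≤ d)
    (hd2 : d^2 = 1 - 2*c₁*c₂) (he : e^2 = 2) (he0 : 0 < e)
    (hX : 0 < X) (hq : 1 + d < e * c₂ * X) :
    1 < 2 * ((c₁ * X⁻¹ + c₂ * X) / 2)^2 := by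
  have hee : (e*c₂*X)^2 = 2*(c₂*X)^2 := by
    rw [mul_pow, mul_pow, he]; ring
  have key2 : 0 < c₂ * X^2 - e * X + c₁ := by
    nlinarith [mul_pos (by linarith : (0:ℝ) < e*c₂*X - 1 - d)
      (by linarith : (0:ℝ) < e*c₂*X - 1 + d), hee, hd2, hc₂]
  have hinv : X⁻¹ * X = 1 := inv_mul_cancel₀ hX.ne'
  have hXX : (c₁ * X⁻¹ + c₂ * X) * X = c₁ + c₂ * X ^ 2 := by
    field_simp
  have hu : e < c₁ * X⁻¹ + c₂ * X := by
    apply (mul_lt_mul_iff_left₀ hX).mp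
    rw [hXX]
    nlinarith [key2]
  nlinarith [mul_pos (sub_pos.mpr hu) (by linarith : (0:ℝ) < c₁ * X⁻¹ + c₂ * X + e), he]

lemma aux_mono (ρx P s t : ℝ) (hρx : 0 ≤ ρx) (hP : 0 < P) (ht0 : 0 < t)
    (hst : t ≤ s) (hft : (1 + ρx*t) * P < t^2) :
    0 < s^2 - (1 + ρx*s) * P ∧
    s * (1 + ρx*s) * (t^2 - (1 + ρx*t) * P) ≤ t * (1 + ρx*t) * (s^2 - (1 + ρx*s) * P) := by
  have hs0 : 0 < s := lt_of_lt_of_le ht0 hst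
  have h1t : 0 < 1 + ρx * t := by have := mul_nonneg hρx ht0.le; linarith
  have h1s : 0 < 1 + ρx * s := by nlinarith [mul_nonneg hρx hs0.le]
  have hmono : t^2 * (1 + ρx*s) ≤ s^2 * (1 + ρx*t) := by
    nlinarith [mul_nonneg (mul_nonneg (mul_nonneg hρx hs0.le) ht0.le) (sub_nonneg.mpr hst),
      mul_nonneg (sub_nonneg.mpr hst) (by linarith : (0:ℝ) ≤ s + t)]
  constructor
  · nlinarith [hmono, mul_pos h1s (sub_pos.mpr hft), h1t]
  · nlinarith [mul_nonneg (mul_nonneg hs0.le ht0.le) (sub_nonneg.mpr hst),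
      mul_nonneg (mul_nonneg (mul_nonneg h1s.le h1t.le) hP.le) (sub_nonneg.mpr hst)]


/-- Appendix B: the residual L² gain bound ρ_∞: the tail series of residual
gains converges and is bounded by the finite computable expression. -/
theorem stmt_9 (c₁ c₂ : ℝ) (hc₁ : 0 < c₁) (hc₂ : 0 < c₂)
    (hc : c₁ + c₂ ≤ Real.sqrt 2)
    (ρx γ : ℝ) (hρx : 0 ≤ ρx) (hγ : 0 < γ)
    (xL xR : ℝ) (hxL : 0 < xL) (hLR : xL < xR) (hxR : xR < Real.pi)
    (N : ℕ) (hN : 1 ≤ N)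
    (ω ζ b : ℕ → ℝ)
    (hω : ∀ n, ω n = (n : ℝ) ^ 2)
    (hζ : ∀ n, ζ n = (c₁ * (ω n)⁻¹ + c₂ * ω n) / 2)
    (hb : ∀ n, b n = (n : ℝ) * Real.sqrt (2 / Real.pi) *
      (Real.cos (n * xR) - Real.cos (n * xL)))
    (M : ℕ)
    (hM : M = max N
      (Nat.floor (Real.sqrt ((1 + Real.sqrt (1 - 2 * c₁ * c₂)) / (Real.sqrt 2 * c₂)))))
    (hfeasM : (ω (M + 1)) ^ 4 > (1 + ρx * (ω (M + 1)) ^ 2) * (γ ^ 2)⁻¹)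
    (hfeas : ∀ n, N < n → n ≤ M →
      (2 * (ζ n) ^ 2 ≤ 1 →
        4 * (ω n) ^ 4 * (ζ n) ^ 2 * (1 - (ζ n) ^ 2) > (1 + ρx * (ω n) ^ 2) * (γ ^ 2)⁻¹) ∧
      (2 * (ζ n) ^ 2 > 1 → (ω n) ^ 4 > (1 + ρx * (ω n) ^ 2) * (γ ^ 2)⁻¹))
    (ρ : ℕ → ℝ)
    (hρ : ∀ n, ρ n =
      if 2 * (ζ n) ^ 2 ≤ 1 then
        (b n) ^ 2 * (1 + ρx * (ω n) ^ 2) /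
          (4 * (ω n) ^ 4 * (ζ n) ^ 2 * (1 - (ζ n) ^ 2) - (1 + ρx * (ω n) ^ 2) * (γ ^ 2)⁻¹)
      else
        (b n) ^ 2 * (1 + ρx * (ω n) ^ 2) /
          ((ω n) ^ 4 - (1 + ρx * (ω n) ^ 2) * (γ ^ 2)⁻¹))
    (CM : ℝ)
    (hCM : CM = (ω (M + 1)) ^ 2 * (1 + ρx * (ω (M + 1)) ^ 2) /
      ((ω (M + 1)) ^ 4 - (1 + ρx * (ω (M + 1)) ^ 2) * (γ ^ 2)⁻¹)) :
    Summable (fun k : ℕ => ρ (k + N + 1)) ∧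
    (∑' k : ℕ, ρ (k + N + 1)) ≤
      (∑ n ∈ Finset.Ioc N M, ρ n)
        + CM * ((xR - xL) - ∑ n ∈ Finset.Icc 1 M, (b n) ^ 2 / (ω n) ^ 2) := by
  have hπ : 0 < π := Real.pi_pos
  have hγ2 : 0 < (γ ^ 2)⁻¹ := by positivity
  have hNM : N ≤ M := by rw [hM]; exact le_max_left _ _
  -- Parseval for g n = b n ^ 2 / (ω n) ^ 2
  have hg : ∀ n : ℕ, b n ^ 2 / (ω n) ^ 2
      = (2/π) * ((Real.cos (n * xR) - Real.cos (n * xL))^2 / (n:ℝ)^2) := by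
    intro n
    rw [hb, hω]
    rcases eq_or_ne n 0 with h0 | h0
    · subst h0; norm_num
    · have hn : ((n:ℝ)) ≠ 0 := Nat.cast_ne_zero.mpr h0
      rw [mul_pow, mul_pow, Real.sq_sqrt (by positivity : (0:ℝ) ≤ 2/π)]
      field_simp
  have hPar : HasSum (fun n : ℕ => b n ^ 2 / (ω n) ^ 2) (xR - xL) := by
    simp only [hg]
    exact parseval_ind xL xR hxL hLR hxR
  have hgs : Summable (fun n : ℕ => b n ^ 2 / (ω n) ^ 2) := hPar.summable
  -- constants for the overdamping threshold
  have hs2 : Real.sqrt 2 ^ 2 = 2 := Real.sq_sqrt (by norm_num)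
  have hs2p : 0 < Real.sqrt 2 := Real.sqrt_pos.mpr (by norm_num)
  have hcc : (0:ℝ) ≤ 1 - 2 * c₁ * c₂ := aux_nonneg_cc c₁ c₂ _ hc₁ hc₂ hs2 hs2p hc
  have hd0 : 0 ≤ Real.sqrt (1 - 2*c₁*c₂) := Real.sqrt_nonneg _
  have hd2 : (Real.sqrt (1 - 2*c₁*c₂))^2 = 1 - 2*c₁*c₂ := Real.sq_sqrt hcc
  have hr0 : (0:ℝ) ≤ (1 + Real.sqrt (1 - 2*c₁*c₂))/(Real.sqrt 2 * c₂) := by positivity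
  have hMfloor : Nat.floor (Real.sqrt ((1 + Real.sqrt (1 - 2 * c₁ * c₂)) / (Real.sqrt 2 * c₂)))
      ≤ M := by rw [hM]; exact le_max_right _ _
  -- fixed quantities at index M+1
  have hBcast : ω (M+1) = ((M:ℝ)+1)^2 := by rw [hω]; push_cast; ring
  set t : ℝ := (((M:ℝ)+1)^2)^2 with ht
  have ht0 : 0 < t := by positivity
  have et1 : (ω (M+1))^4 = t^2 := by rw [hBcast]; ring
  have et2 : (ω (M+1))^2 = t := by rw [hBcast]
  have hfeast : t^2 > (1 + ρx*t) * (γ^2)⁻¹ := by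
    have h := hfeasM; rw [et1, et2] at h; exact h
  have h1t : 0 < 1 + ρx * t := by have := mul_nonneg hρx ht0.le; linarith
  have hden_t : 0 < t^2 - (1 + ρx*t) * (γ^2)⁻¹ := sub_pos.mpr hfeast
  have hCM' : CM = t * (1 + ρx*t) / (t^2 - (1 + ρx*t) * (γ^2)⁻¹) := by
    rw [hCM, et1, et2]
  have hCM0 : 0 ≤ CM := by
    rw [hCM']; exact div_nonneg (mul_nonneg ht0.le h1t.le) hden_t.le
  -- key tail bound
  have key : ∀ n : ℕ, M < n → 0 ≤ ρ n ∧ ρ n ≤ CM * (b n ^ 2 / (ω n) ^ 2) := by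
    intro n hn
    have hMn : ((M:ℝ)+1) ≤ (n:ℝ) := by exact_mod_cast hn
    have hnpos : (0:ℝ) < (n:ℝ) := by
      have : (0:ℝ) < (M:ℝ)+1 := by positivity
      linarith
    have hXpos : (0:ℝ) < (n:ℝ)^2 := by positivity
    -- overdamped: 2 ζ n ^ 2 > 1
    have hnr : Real.sqrt ((1 + Real.sqrt (1 - 2 * c₁ * c₂)) / (Real.sqrt 2 * c₂)) < (n:ℝ) := by
      have h1 := Nat.lt_floor_add_one (Real.sqrt ((1 + Real.sqrt (1 - 2 * c₁ * c₂)) / (Real.sqrt 2 * c₂)))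
      have h2 : ((Nat.floor (Real.sqrt ((1 + Real.sqrt (1 - 2 * c₁ * c₂)) / (Real.sqrt 2 * c₂))) : ℝ) + 1)
          ≤ (n:ℝ) := by
        have : Nat.floor (Real.sqrt ((1 + Real.sqrt (1 - 2 * c₁ * c₂)) / (Real.sqrt 2 * c₂))) + 1 ≤ n := by omega
        exact_mod_cast this
      linarith
    have hA_r : (1 + Real.sqrt (1 - 2*c₁*c₂))/(Real.sqrt 2 * c₂) < (n:ℝ)^2 :=
      Real.lt_sq_of_sqrt_lt hnr
    have hq : 1 + Real.sqrt (1 - 2*c₁*c₂) < Real.sqrt 2 * c₂ * (n:ℝ)^2 := by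
      rw [div_lt_iff₀ (by positivity)] at hA_r; linarith
    have hζn : 1 < 2 * ζ n ^ 2 := by
      rw [hζ, hω]
      exact aux_zeta c₁ c₂ _ _ _ hc₂ hd0 hd2 hs2 hs2p hXpos hq
    have hif : ¬ (2 * ζ n ^ 2 ≤ 1) := not_le.mpr hζn
    -- monotone fraction bound
    set s : ℝ := ((n:ℝ)^2)^2 with hsdef
    have hs0 : 0 < s := by positivity
    have es1 : (ω n)^4 = s^2 := by rw [hω]; ring
    have es2 : (ω n)^2 = s := by rw [hω]
    have hst : t ≤ s := by
      have h1 : ((M:ℝ)+1)^2 ≤ (n:ℝ)^2 := pow_le_pow_left₀ (by positivity) hMn 2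
      exact pow_le_pow_left₀ (by positivity) h1 2
    have h1s : 0 < 1 + ρx * s := by have := mul_nonneg hρx hs0.le; linarith
    have hAux := aux_mono ρx ((γ^2)⁻¹) s t hρx hγ2 ht0 hst hfeast
    have hden_s : 0 < s^2 - (1 + ρx*s) * (γ^2)⁻¹ := hAux.1
    have hcross : s * (1 + ρx*s) * (t^2 - (1 + ρx*t) * (γ^2)⁻¹)
        ≤ t * (1 + ρx*t) * (s^2 - (1 + ρx*s) * (γ^2)⁻¹) := hAux.2
    have hρn : ρ n = b n ^ 2 * (1 + ρx*s) / (s^2 - (1 + ρx*s) * (γ^2)⁻¹) := by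
      rw [hρ n, if_neg hif, es1, es2]
    constructor
    · rw [hρn]
      exact div_nonneg (mul_nonneg (sq_nonneg _) h1s.le) hden_s.le
    · have hfrac : (1 + ρx*s)/(s^2 - (1 + ρx*s) * (γ^2)⁻¹)
          ≤ t * (1 + ρx*t)/((t^2 - (1 + ρx*t) * (γ^2)⁻¹) * s) := by
        rw [div_le_div_iff₀ hden_s (mul_pos hden_t hs0)]
        linear_combination hcross
      calc ρ n = b n ^ 2 * ((1 + ρx*s)/(s^2 - (1 + ρx*s) * (γ^2)⁻¹)) := by
              rw [hρn, mul_div_assoc]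
        _ ≤ b n ^ 2 * (t * (1 + ρx*t)/((t^2 - (1 + ρx*t) * (γ^2)⁻¹) * s)) :=
              mul_le_mul_of_nonneg_left hfrac (sq_nonneg _)
        _ = CM * (b n ^ 2 / (ω n) ^ 2) := by
              rw [hCM', es2]
              field_simp [hden_t.ne', hs0.ne']
  -- summability
  have htail_g : Summable (fun k : ℕ => b (k+M+1) ^ 2 / (ω (k+M+1)) ^ 2) :=
    (summable_nat_add_iff (M+1)).mpr hgs
  have hρtail0 : ∀ k : ℕ, 0 ≤ ρ (k+M+1) := fun k => (key (k+M+1) (by omega)).1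
  have hρtailb : ∀ k : ℕ, ρ (k+M+1) ≤ CM * (b (k+M+1) ^ 2 / (ω (k+M+1)) ^ 2) :=
    fun k => (key (k+M+1) (by omega)).2
  have hsum_tail : Summable (fun k : ℕ => ρ (k+M+1)) :=
    Summable.of_nonneg_of_le hρtail0 hρtailb (htail_g.mul_left CM)
  have hsumN : Summable (fun k : ℕ => ρ (k+N+1)) := by
    apply (summable_nat_add_iff (f := fun k : ℕ => ρ (k+N+1)) (M-N)).mp
    exact hsum_tail.congr fun k => by congr 1; omega
  refine ⟨hsumN, ?_⟩
  -- split the tail sum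
  have hsplit := Summable.sum_add_tsum_nat_add (M-N) hsumN
  have hIoc : ∑ i ∈ Finset.range (M-N), ρ (i+N+1) = ∑ n ∈ Finset.Ioc N M, ρ n := by
    rw [← Finset.Icc_add_one_left_eq_Ioc, ← Finset.Ico_add_one_right_eq_Icc, Finset.sum_Ico_eq_sum_range]
    have h : M + 1 - (N+1) = M - N := by omega
    rw [h]
    exact Finset.sum_congr rfl fun i _ => by congr 1; omega
  have htconv : ∑' i : ℕ, ρ (i + (M-N) + N + 1) = ∑' k : ℕ, ρ (k+M+1) :=
    tsum_congr fun i => by congr 1; omega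
  -- tail of g
  have hb0 : b 0 ^ 2 / (ω 0) ^ 2 = 0 := by rw [hb]; norm_num
  have hrange : ∑ i ∈ Finset.range (M+1), b i ^ 2 / (ω i) ^ 2
      = ∑ n ∈ Finset.Icc 1 M, b n ^ 2 / (ω n) ^ 2 := by
    rw [Finset.sum_range_succ', hb0, add_zero, ← Finset.Ico_add_one_right_eq_Icc,
      Finset.sum_Ico_eq_sum_range]
    have h : M + 1 - 1 = M := by omega
    rw [h]
    exact Finset.sum_congr rfl fun i _ => by rw [Nat.add_comm 1 i]
  have htailg_eq : ∑' k : ℕ, b (k+M+1) ^ 2 / (ω (k+M+1)) ^ 2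
      = (xR - xL) - ∑ n ∈ Finset.Icc 1 M, b n ^ 2 / (ω n) ^ 2 := by
    have h := Summable.sum_add_tsum_nat_add (M+1) hgs
    rw [hPar.tsum_eq, hrange] at h
    have h2 : ∑' (i:ℕ), b (i+(M+1)) ^ 2 / (ω (i+(M+1))) ^ 2
        = ∑' (k:ℕ), b (k+M+1) ^ 2 / (ω (k+M+1)) ^ 2 := tsum_congr fun i => rfl
    rw [h2] at h
    linarith [h]
  have htle : ∑' k : ℕ, ρ (k+M+1)
      ≤ CM * ((xR - xL) - ∑ n ∈ Finset.Icc 1 M, b n ^ 2 / (ω n) ^ 2) := by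
    calc ∑' k : ℕ, ρ (k+M+1)
        ≤ ∑' k : ℕ, CM * (b (k+M+1) ^ 2 / (ω (k+M+1)) ^ 2) :=
          Summable.tsum_le_tsum hρtailb hsum_tail (htail_g.mul_left CM)
      _ = CM * ∑' k : ℕ, (b (k+M+1) ^ 2 / (ω (k+M+1)) ^ 2) := tsum_mul_left
      _ = CM * ((xR - xL) - ∑ n ∈ Finset.Icc 1 M, b n ^ 2 / (ω n) ^ 2) := by
          rw [htailg_eq]
  calc (∑' k : ℕ, ρ (k + N + 1))
      = (∑ i ∈ Finset.range (M-N), ρ (i+N+1)) + ∑' i : ℕ, ρ (i + (M-N) + N + 1) :=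
        hsplit.symm
    _ = (∑ n ∈ Finset.Ioc N M, ρ n) + ∑' k : ℕ, ρ (k+M+1) := by rw [hIoc, htconv]
    _ ≤ (∑ n ∈ Finset.Ioc N M, ρ n)
        + CM * ((xR - xL) - ∑ n ∈ Finset.Icc 1 M, (b n) ^ 2 / (ω n) ^ 2) :=
        add_le_add_right htle _
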